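/- arXiv:1609.04529 — 2 statements merged into one kernel-verified Lean document; each statement's English description precedes it below -/
import Mathlib

section
/- For a > 0 and b > 0, the probability that B(t) ≤ a + b·t for all t ≥ 0 equals 1 − exp(−2ab). -/
open MeasureTheory ProbabilityTheory Real

/-- The standard normal density. -/
noncomputable def stdPdf (x : ℝ) : ℝ := Real.exp (-x ^ 2 / 2) / Real.sqrt (2 * Real.pi)

/-- The standard normal CDF `Φ`. -/
noncomputable def stdCDF (x : ℝ) : ℝ := ∫ u in Set.Iic x, stdPdf u

/-- A standard Brownian motion (indexed by `ℝ`, but only constrained on nonnegative times):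
starts at `0`, a.s. continuous paths, Gaussian increments `N(0, t - s)`, and independent
increments. -/
structure IsBrownianMotion {Ω : Type*} [MeasureSpace Ω] (B : ℝ → Ω → ℝ) : Prop where
  isProb : IsProbabilityMeasure (ℙ : Measure Ω)
  meas : ∀ t, Measurable (B t)
  start : ∀ᵐ ω ∂ℙ, B 0 ω = 0
  cont : ∀ᵐ ω ∂ℙ, Continuous fun t => B t ω
  incr : ∀ s t : ℝ, 0 ≤ s → s ≤ t →
    Measure.map (fun ω => B t ω - B s ω) ℙ = gaussianReal 0 (t - s).toNNReal
  indep : ∀ (n : ℕ) (t : Fin (n + 1) → ℝ), (∀ i, 0 ≤ t i) → Monotone t →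
    iIndepFun
      (fun (i : Fin n) ω => B (t i.succ) ω - B (t i.castSucc) ω) ℙ

set_option linter.unusedSectionVars false

open MeasureTheory ProbabilityTheory Real

lemma gauss_shift (v : NNReal) (t x : ℝ) :
    Real.exp (t * x) * gaussianPDFReal 0 v x
      = Real.exp (t ^ 2 * v / 2) * gaussianPDFReal (t * v) v x := by
  by_cases hv : v = 0
  · simp [hv]
  have hv' : (0:ℝ) < (v:ℝ) := lt_of_le_of_ne (v.coe_nonneg) (by exact_mod_cast Ne.symm hv)
  have key : Real.exp (t*x) * Real.exp (-(x-0)^2/(2*(v:ℝ)))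
      = Real.exp (t^2*(v:ℝ)/2) * Real.exp (-(x - t*(v:ℝ))^2/(2*(v:ℝ))) := by
    rw [← Real.exp_add, ← Real.exp_add]
    congr 1
    field_simp
    ring
  simp only [gaussianPDFReal]
  linear_combination (Real.sqrt (2*π*(v:ℝ)))⁻¹ * key

lemma gaussianPDF_eq_coe (μ : ℝ) (v : NNReal) :
    gaussianPDF μ v = fun x => ((Real.toNNReal (gaussianPDFReal μ v x) : NNReal) : ENNReal) := by
  funext x; rfl

lemma meas_toNNReal_pdf (μ : ℝ) (v : NNReal) :
    Measurable fun x => Real.toNNReal (gaussianPDFReal μ v x) :=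
  (measurable_gaussianPDFReal μ v).real_toNNReal

lemma integrable_exp_gaussianReal (v : NNReal) (t : ℝ) :
    Integrable (fun x => Real.exp (t * x)) (gaussianReal 0 v) := by
  by_cases hv : v = 0
  · simp only [hv, gaussianReal_zero_var]
    refine ⟨(Real.measurable_exp.comp (measurable_const.mul measurable_id)).aestronglyMeasurable, ?_⟩
    rw [HasFiniteIntegral]
    rw [lintegral_dirac]
    exact enorm_lt_top
  rw [gaussianReal_of_var_ne_zero _ hv, gaussianPDF_eq_coe,
    integrable_withDensity_iff_integrable_smul (meas_toNNReal_pdf 0 v)]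
  have : (fun x => (Real.toNNReal (gaussianPDFReal 0 v x)) • Real.exp (t * x))
      = fun x => Real.exp (t ^ 2 * v / 2) * gaussianPDFReal (t * v) v x := by
    funext x
    rw [NNReal.smul_def, smul_eq_mul, Real.coe_toNNReal _ (gaussianPDFReal_nonneg 0 v x),
      mul_comm, gauss_shift]
  rw [this]
  exact (integrable_gaussianPDFReal (t*v) v).const_mul _

lemma integral_exp_gaussianReal (v : NNReal) (t : ℝ) :
    ∫ x, Real.exp (t * x) ∂(gaussianReal 0 v) = Real.exp (t ^ 2 * v / 2) := by
  by_cases hv : v = 0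
  · simp [hv, gaussianReal_zero_var, integral_dirac]
  rw [gaussianReal_of_var_ne_zero _ hv, gaussianPDF_eq_coe,
    integral_withDensity_eq_integral_smul (meas_toNNReal_pdf 0 v)]
  have : (fun x => (Real.toNNReal (gaussianPDFReal 0 v x)) • Real.exp (t * x))
      = fun x => Real.exp (t ^ 2 * v / 2) * gaussianPDFReal (t * v) v x := by
    funext x
    rw [NNReal.smul_def, smul_eq_mul, Real.coe_toNNReal _ (gaussianPDFReal_nonneg 0 v x),
      mul_comm, gauss_shift]
  rw [this, integral_const_mul, integral_gaussianPDFReal_eq_one _ hv, mul_one]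

lemma meas_exp_mul (t : ℝ) : Measurable fun x : ℝ => Real.exp (t * x) := by fun_prop

section RV
variable {Ω : Type*} [MeasureSpace Ω] [IsProbabilityMeasure (ℙ : Measure Ω)]
  {X : Ω → ℝ} {v : NNReal}

lemma exp_rv_integrable (hX : Measurable X) (hmap : Measure.map X ℙ = gaussianReal 0 v)
    (t : ℝ) : Integrable (fun ω => Real.exp (t * X ω)) ℙ := by
  have h := integrable_exp_gaussianReal v t
  rw [← hmap] at h
  rwa [integrable_map_measure (meas_exp_mul t).aestronglyMeasurable
    hX.aemeasurable] at h

lemma exp_rv_integral (hX : Measurable X) (hmap : Measure.map X ℙ = gaussianReal 0 v)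
    (t : ℝ) : ∫ ω, Real.exp (t * X ω) ∂ℙ = Real.exp (t ^ 2 * v / 2) := by
  have h := integral_exp_gaussianReal v t
  rw [← hmap, integral_map hX.aemeasurable
    (meas_exp_mul t).aestronglyMeasurable] at h
  exact h

lemma rv_chernoff (hX : Measurable X) (hmap : Measure.map X ℙ = gaussianReal 0 v)
    {l : ℝ} (hl : 0 ≤ l) (x : ℝ) :
    (ℙ {ω | x < X ω}).toReal ≤ Real.exp (-l * x + l ^ 2 * v / 2) := by
  have h1 : (ℙ {ω | x < X ω}).toReal ≤ (ℙ {ω | x ≤ X ω}).toReal := by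
    apply ENNReal.toReal_mono (measure_ne_top _ _)
    exact measure_mono (fun ω hω => le_of_lt (Set.mem_setOf.mp hω))
  refine h1.trans ?_
  have h2 := measure_ge_le_exp_mul_mgf (X := X) (μ := ℙ) x hl
    (exp_rv_integrable hX hmap l)
  rw [mgf, exp_rv_integral hX hmap l] at h2
  rwa [Real.exp_add]

lemma rv_truncated (hX : Measurable X) (hmap : Measure.map X ℙ = gaussianReal 0 v)
    {l : ℝ} (hl : 0 ≤ l) (t c : ℝ) :
    ∫ ω in {ω | c < X ω}, Real.exp (t * X ω) ∂ℙ
      ≤ Real.exp (-l * c + (t + l) ^ 2 * v / 2) := by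
  have hmeas : MeasurableSet {ω | c < X ω} := measurableSet_lt measurable_const hX
  have hint : Integrable (fun ω => Real.exp (-l * c) * Real.exp ((t + l) * X ω)) ℙ :=
    (exp_rv_integrable hX hmap (t + l)).const_mul _
  have step1 : ∫ ω in {ω | c < X ω}, Real.exp (t * X ω) ∂ℙ
      ≤ ∫ ω in {ω | c < X ω}, Real.exp (-l * c) * Real.exp ((t + l) * X ω) ∂ℙ := by
    refine setIntegral_mono_on ((exp_rv_integrable hX hmap t).integrableOn) hint.integrableOn
      hmeas ?_
    intro ω hω
    rw [← Real.exp_add]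
    apply Real.exp_le_exp.2
    have : c < X ω := hω
    nlinarith
  refine step1.trans ?_
  refine (setIntegral_le_integral hint (ae_of_all _ (fun ω => by positivity))).trans ?_
  rw [integral_const_mul, exp_rv_integral hX hmap (t + l), ← Real.exp_add]

end RV

section IndepHead
variable {Ω : Type*} [MeasureSpace Ω]

lemma indep_head {ξ : ℕ → Ω → ℝ} (N : ℕ)
    (h : iIndepFun (fun i : Fin (N + 1) => ξ i) ℙ)
    (hmeas : ∀ i : ℕ, Measurable (ξ i))
    (F : (Fin N → ℝ) → ℝ) (hF : Measurable F) :
    IndepFun (fun ω => F (fun i => ξ i ω)) (ξ N) ℙ := by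
  classical
  set S : Finset (Fin (N + 1)) := Finset.univ.filter (fun i => (i : ℕ) < N) with hS
  set T : Finset (Fin (N + 1)) := {Fin.last N} with hT
  have hST : Disjoint S T := by
    rw [Finset.disjoint_right]
    intro i hiT hiS
    rw [hT, Finset.mem_singleton] at hiT
    rw [hS, Finset.mem_filter] at hiS
    rw [hiT] at hiS
    simp [Fin.val_last] at hiS
  have h' := h.indepFun_finset S T hST (fun i => hmeas i)
  have hφ : Measurable fun p : {i : Fin (N+1) // i ∈ S} → ℝ =>
      F (fun j : Fin N => p ⟨⟨(j : ℕ), (j.2.trans (Nat.lt_succ_self N))⟩, by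
        rw [hS, Finset.mem_filter]; exact ⟨Finset.mem_univ _, j.2⟩⟩) :=
    hF.comp (measurable_pi_lambda _ (fun j => measurable_pi_apply _))
  have hψ : Measurable fun q : {i : Fin (N+1) // i ∈ T} → ℝ =>
      q ⟨Fin.last N, by rw [hT]; exact Finset.mem_singleton_self _⟩ :=
    measurable_pi_apply _
  have := h'.comp hφ hψ
  exact this

end IndepHead

noncomputable section BLaux
variable {Ω : Type*} [MeasureSpace Ω]

/-- increment on the grid -/
def blXi (B : ℝ → Ω → ℝ) (δ : ℝ) (n : ℕ) (ω : Ω) : ℝ :=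
  B (((n : ℝ) + 1) * δ) ω - B ((n : ℝ) * δ) ω

/-- position (relative to start) on the grid -/
def blY (B : ℝ → Ω → ℝ) (δ : ℝ) (n : ℕ) (ω : Ω) : ℝ := B ((n : ℝ) * δ) ω - B 0 ω

/-- exponential martingale -/
def blM (B : ℝ → Ω → ℝ) (b δ : ℝ) (n : ℕ) (ω : Ω) : ℝ :=
  Real.exp (2 * b * blY B δ n ω - 2 * b ^ 2 * ((n : ℝ) * δ))

/-- never not exceeded up to N -/
def blC (B : ℝ → Ω → ℝ) (a b δ : ℝ) (N : ℕ) : Set Ω :=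
  {ω | ∀ n ≤ N, blY B δ n ω ≤ a + b * ((n : ℝ) * δ)}

/-- first exceedance at step n+1 -/
def blA (B : ℝ → Ω → ℝ) (a b δ : ℝ) (n : ℕ) : Set Ω :=
  blC B a b δ n ∩ {ω | a + b * (((n : ℝ) + 1) * δ) < blY B δ (n + 1) ω}

variable {B : ℝ → Ω → ℝ} {a b δ : ℝ}

section Basic
variable (hB : IsBrownianMotion B) (hδ : 0 < δ)
include hB

lemma blXi_meas (n : ℕ) : Measurable (blXi B δ n) := (hB.meas _).sub (hB.meas _)
lemma blY_meas (n : ℕ) : Measurable (blY B δ n) := (hB.meas _).sub (hB.meas _)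
lemma blM_meas (n : ℕ) : Measurable (blM B b δ n) := by
  exact Real.measurable_exp.comp (((blY_meas hB n).const_mul _).sub measurable_const)
lemma blC_meas (N : ℕ) : MeasurableSet (blC B a b δ N) := by
  have : blC B a b δ N = ⋂ n ∈ Finset.range (N + 1),
      {ω | blY B δ n ω ≤ a + b * ((n : ℝ) * δ)} := by
    ext ω
    simp only [blC, Set.mem_setOf_eq, Set.mem_iInter, Finset.mem_range, Nat.lt_succ_iff]
  rw [this]
  exact MeasurableSet.biInter (Set.to_countable _)
    (fun n _ => measurableSet_le (blY_meas hB n) measurable_const)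
lemma blA_meas (n : ℕ) : MeasurableSet (blA B a b δ n) :=
  (blC_meas hB n).inter (measurableSet_lt measurable_const (blY_meas hB _))

include hδ

lemma blXi_map (n : ℕ) : Measure.map (blXi B δ n) ℙ = gaussianReal 0 δ.toNNReal := by
  have h := hB.incr ((n : ℝ) * δ) (((n : ℝ) + 1) * δ)
    (by positivity) (by nlinarith)
  rw [show ((n : ℝ) + 1) * δ - (n : ℝ) * δ = δ by ring] at h
  exact h

lemma blY_map (n : ℕ) : Measure.map (blY B δ n) ℙ = gaussianReal 0 ((n : ℝ) * δ).toNNReal := by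
  have h := hB.incr 0 ((n : ℝ) * δ) le_rfl (by positivity)
  rw [show (n : ℝ) * δ - 0 = (n : ℝ) * δ by ring] at h
  exact h

end Basic

lemma blY_zero : blY B δ 0 = fun _ => 0 := by
  funext ω; simp [blY]

lemma blY_succ (n : ℕ) : blY B δ (n + 1) = fun ω => blY B δ n ω + blXi B δ n ω := by
  funext ω
  simp only [blY, blXi, Nat.cast_add, Nat.cast_one]
  ring

lemma blY_eq_sum (n : ℕ) (ω : Ω) : blY B δ n ω = ∑ i ∈ Finset.range n, blXi B δ i ω := by
  induction n with
  | zero => simp [blY_zero]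
  | succ n ih => rw [blY_succ, Finset.sum_range_succ, ← ih]

lemma blM_succ (n : ℕ) : blM B b δ (n + 1)
    = fun ω => blM B b δ n ω * Real.exp (2 * b * blXi B δ n ω - 2 * b ^ 2 * δ) := by
  funext ω
  simp only [blM, blY_succ n, ← Real.exp_add]
  congr 1
  push_cast
  ring

lemma blC_succ (N : ℕ) : blC B a b δ N =
    blC B a b δ (N + 1) ∪ blA B a b δ N := by
  ext ω
  simp only [blC, blA, Set.mem_union, Set.mem_inter_iff, Set.mem_setOf_eq]
  constructor
  · intro h
    rcases le_or_gt (blY B δ (N + 1) ω) (a + b * (((N : ℝ) + 1) * δ)) with h'|h'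
    · left
      intro n hn
      rcases Nat.lt_succ_iff_lt_or_eq.mp (Nat.lt_succ_of_le hn) with h''|h''
      · exact h n (Nat.lt_succ_iff.mp h'')
      · subst h''; push_cast; exact h' 
    · right; exact ⟨h, h'⟩
  · rintro (h | ⟨h, _⟩)
    · exact fun n hn => h n (hn.trans (Nat.le_succ N))
    · exact h

lemma blC_disjoint_blA (N : ℕ) : Disjoint (blC B a b δ (N + 1)) (blA B a b δ N) := by
  rw [Set.disjoint_left]
  rintro ω h1 ⟨_, h2⟩
  have := h1 (N + 1) le_rfl
  push_cast at this
  exact absurd this (not_le.mpr h2)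

end BLaux
section Core
variable {Ω : Type*} [MeasureSpace Ω] {B : ℝ → Ω → ℝ} {a b δ : ℝ}

lemma blM_integrable (hB : IsBrownianMotion B) (hδ : 0 < δ) (n : ℕ) :
    Integrable (blM B b δ n) ℙ := by
  haveI := hB.isProb
  have h := exp_rv_integrable (blY_meas hB n) (blY_map hB hδ n) (2 * b)
  have heq : blM B b δ n
      = fun ω => Real.exp (-(2 * b ^ 2 * ((n : ℝ) * δ))) * Real.exp ((2 * b) * blY B δ n ω) := by
    funext ω
    simp only [blM, ← Real.exp_add]
    congr 1
    ring
  rw [heq]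
  exact h.const_mul _

lemma blStep_integrable (hB : IsBrownianMotion B) (hδ : 0 < δ) (n : ℕ) :
    Integrable (fun ω => Real.exp (2 * b * blXi B δ n ω - 2 * b ^ 2 * δ)) ℙ := by
  haveI := hB.isProb
  have h := exp_rv_integrable (blXi_meas hB n) (blXi_map hB hδ n) (2 * b)
  have heq : (fun ω => Real.exp (2 * b * blXi B δ n ω - 2 * b ^ 2 * δ))
      = fun ω => Real.exp (-(2 * b ^ 2 * δ)) * Real.exp ((2 * b) * blXi B δ n ω) := by
    funext ω
    rw [← Real.exp_add]
    congr 1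
    ring
  rw [heq]
  exact h.const_mul _

lemma blStep_integral (hB : IsBrownianMotion B) (hδ : 0 < δ) (n : ℕ) :
    ∫ ω, Real.exp (2 * b * blXi B δ n ω - 2 * b ^ 2 * δ) ∂ℙ = 1 := by
  haveI := hB.isProb
  have heq : (fun ω => Real.exp (2 * b * blXi B δ n ω - 2 * b ^ 2 * δ))
      = fun ω => Real.exp (-(2 * b ^ 2 * δ)) * Real.exp ((2 * b) * blXi B δ n ω) := by
    funext ω
    rw [← Real.exp_add]
    congr 1
    ring
  rw [heq, integral_const_mul, exp_rv_integral (blXi_meas hB n) (blXi_map hB hδ n) (2 * b),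
    ← Real.exp_add, Real.coe_toNNReal _ hδ.le]
  rw [show -(2 * b ^ 2 * δ) + (2 * b) ^ 2 * δ / 2 = 0 by ring, Real.exp_zero]

lemma blW_integrable (hB : IsBrownianMotion B) (hδ : 0 < δ) (N : ℕ) :
    Integrable ((blC B a b δ N).indicator (blM B b δ N)) ℙ :=
  (blM_integrable hB hδ N).indicator (blC_meas hB N)

lemma blIndepFam (hB : IsBrownianMotion B) (hδ : 0 < δ) (N : ℕ) :
    iIndepFun (fun i : Fin (N + 1) => blXi B δ (i : ℕ)) ℙ := by
  have h := hB.indep (N + 1) (fun i : Fin (N + 2) => (i : ℕ) * δ)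
    (fun i => by positivity)
    (fun i j hij => by
      have : ((i : ℕ) : ℝ) ≤ ((j : ℕ) : ℝ) := Nat.cast_le.mpr (Fin.le_iff_val_le_val.mp hij)
      exact mul_le_mul_of_nonneg_right this hδ.le)
  have heq : (fun (i : Fin (N + 1)) ω =>
      B ((fun i : Fin (N + 2) => (i : ℕ) * δ) i.succ) ω
        - B ((fun i : Fin (N + 2) => (i : ℕ) * δ) i.castSucc) ω)
      = fun i : Fin (N + 1) => blXi B δ (i : ℕ) := by
    funext i ω
    simp only [blXi, Fin.val_succ, Fin.coe_castSucc]
    push_cast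
    ring_nf
  rw [heq] at h
  exact h

lemma blIndep (hB : IsBrownianMotion B) (hδ : 0 < δ) (N : ℕ) {g : ℝ → ℝ} (hg : Measurable g) :
    IndepFun ((blC B a b δ N).indicator (blM B b δ N)) (fun ω => g (blXi B δ N ω)) ℙ := by
  classical
  set F : (Fin N → ℝ) → ℝ :=
    Set.indicator {q : Fin N → ℝ | ∀ n ≤ N,
        (∑ i ∈ Finset.range n, if h : i < N then q ⟨i, h⟩ else 0) ≤ a + b * ((n : ℝ) * δ)}
      (fun q => Real.exp
        (2 * b * (∑ i ∈ Finset.range N, if h : i < N then q ⟨i, h⟩ else 0)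
          - 2 * b ^ 2 * ((N : ℝ) * δ))) with hFdef
  have hterm : ∀ i : ℕ, Measurable fun q : Fin N → ℝ => (if h : i < N then q ⟨i, h⟩ else 0) := by
    intro i
    by_cases hi : i < N
    · simp only [dif_pos hi]; exact measurable_pi_apply _
    · simp only [dif_neg hi]; exact measurable_const
  have hsum : ∀ n : ℕ, Measurable fun q : Fin N → ℝ =>
      ∑ i ∈ Finset.range n, if h : i < N then q ⟨i, h⟩ else 0 := by
    intro n
    exact Finset.measurable_sum _ (fun i _ => hterm i)
  have hsetF : MeasurableSet {q : Fin N → ℝ | ∀ n ≤ N,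
      (∑ i ∈ Finset.range n, if h : i < N then q ⟨i, h⟩ else 0) ≤ a + b * ((n : ℝ) * δ)} := by
    have : {q : Fin N → ℝ | ∀ n ≤ N,
        (∑ i ∈ Finset.range n, if h : i < N then q ⟨i, h⟩ else 0) ≤ a + b * ((n : ℝ) * δ)}
        = ⋂ n ∈ Finset.range (N + 1), {q : Fin N → ℝ |
          (∑ i ∈ Finset.range n, if h : i < N then q ⟨i, h⟩ else 0) ≤ a + b * ((n : ℝ) * δ)} := by
      ext q
      simp only [Set.mem_setOf_eq, Set.mem_iInter, Finset.mem_range, Nat.lt_succ_iff]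
    rw [this]
    exact MeasurableSet.biInter (Set.to_countable _)
      (fun n _ => measurableSet_le (hsum n) measurable_const)
  have hF : Measurable F := by
    refine Measurable.indicator ?_ hsetF
    exact Real.measurable_exp.comp (((hsum N).const_mul _).sub measurable_const)
  have hvecsum : ∀ (ω : Ω) (n : ℕ), n ≤ N →
      (∑ i ∈ Finset.range n, if h : i < N then (fun j : Fin N => blXi B δ (j : ℕ) ω) ⟨i, h⟩ else 0)
        = blY B δ n ω := by
    intro ω n hn
    rw [blY_eq_sum]
    refine Finset.sum_congr rfl (fun i hi => ?_)
    rw [dif_pos (lt_of_lt_of_le (Finset.mem_range.mp hi) hn)]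
  have hW : (blC B a b δ N).indicator (blM B b δ N)
      = fun ω => F (fun j : Fin N => blXi B δ (j : ℕ) ω) := by
    funext ω
    by_cases hω : ω ∈ blC B a b δ N
    · rw [Set.indicator_of_mem hω]
      have hmem : (fun j : Fin N => blXi B δ (j : ℕ) ω) ∈ {q : Fin N → ℝ | ∀ n ≤ N,
          (∑ i ∈ Finset.range n, if h : i < N then q ⟨i, h⟩ else 0) ≤ a + b * ((n : ℝ) * δ)} := by
        intro n hn
        rw [hvecsum ω n hn]
        exact hω n hn
      rw [hFdef, Set.indicator_of_mem hmem, hvecsum ω N le_rfl]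
      rfl
    · rw [Set.indicator_of_notMem hω, hFdef, Set.indicator_of_notMem]
      intro hmem
      refine hω (fun n hn => ?_)
      rw [← hvecsum ω n hn]
      exact hmem n hn
  rw [hW]
  exact (indep_head N (blIndepFam hB hδ N) (fun i => blXi_meas hB i) F hF).comp
    measurable_id hg

lemma blIdentity (hB : IsBrownianMotion B) (ha : 0 < a) (hb : 0 < b) (hδ : 0 < δ) (N : ℕ) :
    (∑ n ∈ Finset.range N, ∫ ω in blA B a b δ n, blM B b δ (n + 1) ω ∂ℙ)
      + ∫ ω in blC B a b δ N, blM B b δ N ω ∂ℙ = 1 := by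
  haveI := hB.isProb
  induction N with
  | zero =>
    simp only [Finset.range_zero, Finset.sum_empty, zero_add]
    have hC : blC B a b δ 0 = Set.univ := by
      ext ω
      simp only [blC, Set.mem_setOf_eq, Set.mem_univ, iff_true, Nat.le_zero]
      rintro n rfl
      rw [blY_zero]
      push_cast
      nlinarith
    have hM : blM B b δ 0 = fun _ => 1 := by
      funext ω
      simp [blM, blY_zero]
    rw [hC, hM, setIntegral_const]
    simp
  | succ N ih =>
    rw [Finset.sum_range_succ]
    have hint : Integrable (blM B b δ (N + 1)) ℙ := blM_integrable hB hδ (N + 1)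
    have h1 : ∫ ω in blC B a b δ N, blM B b δ (N + 1) ω ∂ℙ
        = ∫ ω in blC B a b δ (N + 1), blM B b δ (N + 1) ω ∂ℙ
          + ∫ ω in blA B a b δ N, blM B b δ (N + 1) ω ∂ℙ := by
      rw [blC_succ (B := B) (a := a) (b := b) (δ := δ) N]
      exact setIntegral_union (blC_disjoint_blA N) (blA_meas hB N)
        hint.integrableOn hint.integrableOn
    classical
    have h2 : ∫ ω in blC B a b δ N, blM B b δ (N + 1) ω ∂ℙ
        = ∫ ω in blC B a b δ N, blM B b δ N ω ∂ℙ := by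
      have hind : (fun ω => Real.exp (2 * b * blXi B δ N ω - 2 * b ^ 2 * δ))
          = fun ω => (fun x => Real.exp (2 * b * x - 2 * b ^ 2 * δ)) (blXi B δ N ω) := rfl
      have hgmeas : Measurable fun x : ℝ => Real.exp (2 * b * x - 2 * b ^ 2 * δ) := by
        exact Real.measurable_exp.comp ((measurable_id.const_mul _).sub measurable_const)
      calc ∫ ω in blC B a b δ N, blM B b δ (N + 1) ω ∂ℙ
          = ∫ ω, ((blC B a b δ N).indicator (blM B b δ N) ω)
              * Real.exp (2 * b * blXi B δ N ω - 2 * b ^ 2 * δ) ∂ℙ := by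
            rw [← integral_indicator (blC_meas hB N)]
            congr 1
            funext ω
            rw [blM_succ]
            rw [Set.indicator_apply, Set.indicator_apply]
            split_ifs <;> simp
        _ = (∫ ω, (blC B a b δ N).indicator (blM B b δ N) ω ∂ℙ)
              * ∫ ω, Real.exp (2 * b * blXi B δ N ω - 2 * b ^ 2 * δ) ∂ℙ := by
            exact IndepFun.integral_fun_mul_eq_mul_integral
              (blIndep hB hδ N hgmeas) (blW_integrable hB hδ N).aestronglyMeasurable (blStep_integrable hB hδ N).aestronglyMeasurable
        _ = ∫ ω in blC B a b δ N, blM B b δ N ω ∂ℙ := by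
            rw [blStep_integral hB hδ N, mul_one, integral_indicator (blC_meas hB N)]
    linarith [ih, h1, h2]

end Core
section Bounds
variable {Ω : Type*} [MeasureSpace Ω] {B : ℝ → Ω → ℝ} {a b δ : ℝ}

/-- the event that the grid walk ever exceeds the line -/
def blE (B : ℝ → Ω → ℝ) (a b δ : ℝ) : Set Ω :=
  {ω | ∃ n : ℕ, a + b * ((n : ℝ) * δ) < blY B δ n ω}

lemma blE_meas (hB : IsBrownianMotion B) : MeasurableSet (blE B a b δ) := by
  have : blE B a b δ = ⋃ n : ℕ, {ω | a + b * ((n : ℝ) * δ) < blY B δ n ω} := by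
    ext ω; simp [blE]
  rw [this]
  exact MeasurableSet.iUnion (fun n => measurableSet_lt measurable_const (blY_meas hB n))

lemma blE_eq_iUnion (ha : 0 < a) : blE B a b δ = ⋃ n : ℕ, blA B a b δ n := by
  classical
  ext ω
  simp only [blE, Set.mem_setOf_eq, Set.mem_iUnion]
  constructor
  · intro h
    have hP : ∃ n : ℕ, a + b * ((n : ℝ) * δ) < blY B δ n ω := h
    obtain ⟨n₀, hspec, hmin⟩ : ∃ n₀ : ℕ, (a + b * ((n₀ : ℝ) * δ) < blY B δ n₀ ω)
        ∧ ∀ m < n₀, ¬(a + b * ((m : ℝ) * δ) < blY B δ m ω) :=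
      ⟨Nat.find hP, Nat.find_spec hP, fun m hm => Nat.find_min hP hm⟩
    have hne : n₀ ≠ 0 := by
      intro h0
      rw [h0, blY_zero] at hspec
      push_cast at hspec
      nlinarith
    obtain ⟨m, rfl⟩ := Nat.exists_eq_succ_of_ne_zero hne
    refine ⟨m, ?_, ?_⟩
    · intro j hj
      have := hmin j (Nat.lt_succ_of_le hj)
      linarith [not_lt.mp this]
    · have h' : a + b * (((m + 1 : ℕ) : ℝ) * δ) < blY B δ (m + 1) ω := hspec
      show a + b * (((m : ℝ) + 1) * δ) < blY B δ (m + 1) ω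
      push_cast at h'
      linarith
  · rintro ⟨n, _, hgt⟩
    have hgt' : a + b * (((n : ℝ) + 1) * δ) < blY B δ (n + 1) ω := hgt
    refine ⟨n + 1, ?_⟩
    push_cast
    push_cast at hgt'
    linarith

lemma blA_pairwise_disjoint :
    Pairwise (Function.onFun Disjoint (blA B a b δ)) := by
  have key : ∀ m n : ℕ, m < n → Disjoint (blA B a b δ m) (blA B a b δ n) := by
    intro m n hmn
    rw [Set.disjoint_left]
    rintro ω ⟨_, h2⟩ ⟨h3, _⟩
    have h4 := h3 (m + 1) (Nat.succ_le_of_lt hmn)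
    have h2' : a + b * (((m : ℝ) + 1) * δ) < blY B δ (m + 1) ω := h2
    push_cast at h4
    linarith
  intro m n hmn
  rcases lt_or_gt_of_ne hmn with h | h
  · exact key m n h
  · exact (key n m h).symm

lemma blM_ge_on_blA (hb : 0 < b) (hδ : 0 < δ) (n : ℕ) (ω : Ω) (hω : ω ∈ blA B a b δ n) :
    Real.exp (2 * a * b) ≤ blM B b δ (n + 1) ω := by
  obtain ⟨_, h2⟩ := hω
  simp only [Set.mem_setOf_eq] at h2
  rw [blM]
  apply Real.exp_le_exp.2
  push_cast
  nlinarith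

lemma blM_nonneg (n : ℕ) (ω : Ω) : 0 ≤ blM B b δ n ω := (Real.exp_pos _).le

lemma blM_le_on_blC (hb : 0 < b) (hδ : 0 < δ) (N : ℕ) (ω : Ω) (hω : ω ∈ blC B a b δ N) :
    blM B b δ N ω ≤ Real.exp (2 * a * b) := by
  have := hω N le_rfl
  rw [blM]
  apply Real.exp_le_exp.2
  nlinarith

lemma blSum_le (hB : IsBrownianMotion B) (ha : 0 < a) (hb : 0 < b) (hδ : 0 < δ) (N : ℕ) :
    ∑ n ∈ Finset.range N, (ℙ (blA B a b δ n)).toReal ≤ Real.exp (-(2 * a * b)) := by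
  haveI := hB.isProb
  have hid := blIdentity hB ha hb hδ N
  have hC : 0 ≤ ∫ ω in blC B a b δ N, blM B b δ N ω ∂ℙ :=
    setIntegral_nonneg (blC_meas hB N) (fun ω _ => blM_nonneg _ ω)
  have hsum : ∀ n, Real.exp (2 * a * b) * (ℙ (blA B a b δ n)).toReal
      ≤ ∫ ω in blA B a b δ n, blM B b δ (n + 1) ω ∂ℙ := by
    intro n
    have h := setIntegral_ge_of_const_le (blA_meas hB (a := a) n) (measure_ne_top _ _)
      (fun ω hω => blM_ge_on_blA hb hδ n ω hω) ((blM_integrable hB hδ (n+1)).integrableOn)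
    rw [smul_eq_mul, mul_comm] at h
    exact h
  have h1 : Real.exp (2 * a * b) * ∑ n ∈ Finset.range N, (ℙ (blA B a b δ n)).toReal ≤ 1 := by
    rw [Finset.mul_sum]
    calc ∑ n ∈ Finset.range N, Real.exp (2 * a * b) * (ℙ (blA B a b δ n)).toReal
        ≤ ∑ n ∈ Finset.range N, ∫ ω in blA B a b δ n, blM B b δ (n + 1) ω ∂ℙ :=
          Finset.sum_le_sum (fun n _ => hsum n)
      _ ≤ 1 := by linarith
  have hS : (∑ n ∈ Finset.range N, (ℙ (blA B a b δ n)).toReal) * Real.exp (2 * a * b) ≤ 1 := by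
    nlinarith [h1]
  rw [Real.exp_neg, ← one_div]
  rw [le_div_iff₀ (Real.exp_pos _)]
  exact hS

lemma blE_measure_le (hB : IsBrownianMotion B) (ha : 0 < a) (hb : 0 < b) (hδ : 0 < δ) :
    ℙ (blE B a b δ) ≤ ENNReal.ofReal (Real.exp (-(2 * a * b))) := by
  haveI := hB.isProb
  rw [blE_eq_iUnion ha]
  have hmono : Monotone (fun N : ℕ => ⋃ n ∈ Finset.range N, blA B a b δ n) := by
    intro N M hNM ω hω
    simp only [Set.mem_iUnion, Finset.mem_range] at hω ⊢
    obtain ⟨n, hn, h⟩ := hω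
    exact ⟨n, lt_of_lt_of_le hn hNM, h⟩
  have hU : (⋃ n : ℕ, blA B a b δ n) = ⋃ N : ℕ, ⋃ n ∈ Finset.range N, blA B a b δ n := by
    ext ω
    simp only [Set.mem_iUnion, Finset.mem_range]
    constructor
    · rintro ⟨n, hn⟩; exact ⟨n + 1, n, Nat.lt_succ_self n, hn⟩
    · rintro ⟨N, n, _, hn⟩; exact ⟨n, hn⟩
  rw [hU, hmono.directed_le.measure_iUnion]
  refine iSup_le (fun N => ?_)
  have hfin : ℙ (⋃ n ∈ Finset.range N, blA B a b δ n) = ∑ n ∈ Finset.range N, ℙ (blA B a b δ n) := by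
    rw [measure_biUnion_finset]
    · intro m hm n hn hmn
      exact blA_pairwise_disjoint hmn
    · exact fun n _ => blA_meas hB n
  rw [hfin]
  have hne : ∀ n ∈ Finset.range N, ℙ (blA B a b δ n) ≠ ⊤ := fun n _ => measure_ne_top _ _
  rw [← ENNReal.ofReal_toReal (a := ∑ n ∈ Finset.range N, ℙ (blA B a b δ n))
    (by rw [← lt_top_iff_ne_top]; exact ENNReal.sum_lt_top.mpr (fun n hn => lt_top_iff_ne_top.mpr (hne n hn)))]
  apply ENNReal.ofReal_le_ofReal
  rw [ENNReal.toReal_sum hne]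
  exact blSum_le hB ha hb hδ N

end Bounds
section Lower
variable {Ω : Type*} [MeasureSpace Ω] {B : ℝ → Ω → ℝ} {a b δ : ℝ}

lemma blA_est (hB : IsBrownianMotion B) (hb : 0 < b) (hδ : 0 < δ)
    {c l : ℝ} (hc : 0 ≤ c) (hl : 0 ≤ l) (n : ℕ) :
    ∫ ω in blA B a b δ n, blM B b δ (n + 1) ω ∂ℙ
      ≤ Real.exp (2 * a * b) * Real.exp (2 * b * c) * (ℙ (blA B a b δ n)).toReal
        + Real.exp (2 * a * b) * Real.exp (-l * c + (2 * b + l) ^ 2 * δ / 2) := by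
  haveI := hB.isProb
  have hAmeas := blA_meas hB (a := a) (b := b) (δ := δ) n
  have hξmeas := blXi_meas hB (δ := δ) n
  have hMint := blM_integrable hB hδ (b := b) (n + 1)
  have hsplit : blA B a b δ n
      = (blA B a b δ n ∩ {ω | blXi B δ n ω ≤ c}) ∪ (blA B a b δ n ∩ {ω | c < blXi B δ n ω}) := by
    ext ω
    by_cases h : blXi B δ n ω ≤ c
    · simp [h, not_lt.mpr h]
    · simp [h, not_le.mp h]
  have hm1 : MeasurableSet (blA B a b δ n ∩ {ω | blXi B δ n ω ≤ c}) :=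
    hAmeas.inter (measurableSet_le hξmeas measurable_const)
  have hm2 : MeasurableSet (blA B a b δ n ∩ {ω | c < blXi B δ n ω}) :=
    hAmeas.inter (measurableSet_lt measurable_const hξmeas)
  have hdisj : Disjoint (blA B a b δ n ∩ {ω | blXi B δ n ω ≤ c})
      (blA B a b δ n ∩ {ω | c < blXi B δ n ω}) := by
    rw [Set.disjoint_left]
    rintro ω ⟨_, h1⟩ ⟨_, h2⟩
    have h1' : blXi B δ n ω ≤ c := h1
    have h2' : c < blXi B δ n ω := h2
    linarith
  have hIeq : ∫ ω in blA B a b δ n, blM B b δ (n + 1) ω ∂ℙ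
      = (∫ ω in blA B a b δ n ∩ {ω | blXi B δ n ω ≤ c}, blM B b δ (n + 1) ω ∂ℙ)
        + ∫ ω in blA B a b δ n ∩ {ω | c < blXi B δ n ω}, blM B b δ (n + 1) ω ∂ℙ := by
    rw [← setIntegral_union hdisj hm2 hMint.integrableOn hMint.integrableOn, ← hsplit]
  rw [hIeq]
  have part1 : ∫ ω in blA B a b δ n ∩ {ω | blXi B δ n ω ≤ c}, blM B b δ (n + 1) ω ∂ℙ
      ≤ Real.exp (2 * a * b) * Real.exp (2 * b * c) * (ℙ (blA B a b δ n)).toReal := by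
    have hle : ∀ ω ∈ blA B a b δ n ∩ {ω | blXi B δ n ω ≤ c},
        blM B b δ (n + 1) ω ≤ Real.exp (2 * a * b) * Real.exp (2 * b * c) := by
      rintro ω ⟨⟨hC, _⟩, hξ⟩
      have hYn : blY B δ n ω ≤ a + b * ((n : ℝ) * δ) := hC n le_rfl
      have hξ' : blXi B δ n ω ≤ c := hξ
      rw [blM, ← Real.exp_add]
      apply Real.exp_le_exp.2
      have hy := blY_succ (B := B) (δ := δ) n
      have : blY B δ (n + 1) ω = blY B δ n ω + blXi B δ n ω := by rw [hy]
      push_cast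
      nlinarith
    calc ∫ ω in blA B a b δ n ∩ {ω | blXi B δ n ω ≤ c}, blM B b δ (n + 1) ω ∂ℙ
        ≤ ∫ _ω in blA B a b δ n ∩ {ω | blXi B δ n ω ≤ c},
            (Real.exp (2 * a * b) * Real.exp (2 * b * c)) ∂ℙ :=
          setIntegral_mono_on hMint.integrableOn (integrableOn_const
            (measure_ne_top _ _)) hm1 hle
      _ = (ℙ (blA B a b δ n ∩ {ω | blXi B δ n ω ≤ c})).toReal
            * (Real.exp (2 * a * b) * Real.exp (2 * b * c)) := by
          rw [setIntegral_const]; rfl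
      _ ≤ Real.exp (2 * a * b) * Real.exp (2 * b * c) * (ℙ (blA B a b δ n)).toReal := by
          rw [mul_comm]
          gcongr
          · exact measure_ne_top _ _
          · exact Set.inter_subset_left
  have part2 : ∫ ω in blA B a b δ n ∩ {ω | c < blXi B δ n ω}, blM B b δ (n + 1) ω ∂ℙ
      ≤ Real.exp (2 * a * b) * Real.exp (-l * c + (2 * b + l) ^ 2 * δ / 2) := by
    have hle : ∀ ω ∈ blA B a b δ n ∩ {ω | c < blXi B δ n ω},
        blM B b δ (n + 1) ω ≤ Real.exp (2 * a * b) * Real.exp (2 * b * blXi B δ n ω) := by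
      rintro ω ⟨⟨hC, _⟩, _⟩
      have hYn : blY B δ n ω ≤ a + b * ((n : ℝ) * δ) := hC n le_rfl
      rw [blM, ← Real.exp_add]
      apply Real.exp_le_exp.2
      have hy := blY_succ (B := B) (δ := δ) n
      have : blY B δ (n + 1) ω = blY B δ n ω + blXi B δ n ω := by rw [hy]
      push_cast
      nlinarith
    have hint2 : IntegrableOn (fun ω => Real.exp (2 * a * b) * Real.exp (2 * b * blXi B δ n ω))
        (blA B a b δ n ∩ {ω | c < blXi B δ n ω}) ℙ :=
      ((exp_rv_integrable hξmeas (blXi_map hB hδ n) (2 * b)).const_mul _).integrableOn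
    calc ∫ ω in blA B a b δ n ∩ {ω | c < blXi B δ n ω}, blM B b δ (n + 1) ω ∂ℙ
        ≤ ∫ ω in blA B a b δ n ∩ {ω | c < blXi B δ n ω},
            Real.exp (2 * a * b) * Real.exp (2 * b * blXi B δ n ω) ∂ℙ :=
          setIntegral_mono_on hMint.integrableOn hint2 hm2 hle
      _ ≤ ∫ ω in {ω | c < blXi B δ n ω},
            Real.exp (2 * a * b) * Real.exp (2 * b * blXi B δ n ω) ∂ℙ := by
          apply setIntegral_mono_set
            ((exp_rv_integrable hξmeas (blXi_map hB hδ n) (2 * b)).const_mul _).integrableOn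
            (ae_of_all _ (fun ω => by positivity))
            (HasSubset.Subset.eventuallyLE Set.inter_subset_right)
      _ = Real.exp (2 * a * b) * ∫ ω in {ω | c < blXi B δ n ω},
            Real.exp (2 * b * blXi B δ n ω) ∂ℙ := by
          rw [integral_const_mul]
      _ ≤ Real.exp (2 * a * b) * Real.exp (-l * c + (2 * b + l) ^ 2 * δ / 2) := by
          have h := rv_truncated hξmeas (blXi_map hB hδ n) hl (2 * b) c
          rw [Real.coe_toNNReal _ hδ.le] at h
          exact mul_le_mul_of_nonneg_left h (Real.exp_pos _).le
  linarith

lemma blC_est (hB : IsBrownianMotion B) (hb : 0 < b) (hδ : 0 < δ) (R : ℝ) (N : ℕ) :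
    ∫ ω in blC B a b δ N, blM B b δ N ω ∂ℙ
      ≤ Real.exp (2 * b * (a - R))
        + Real.exp (2 * a * b)
          * Real.exp (-b * (a - R + b * ((N : ℝ) * δ)) + b ^ 2 * ((N : ℝ) * δ) / 2) := by
  haveI := hB.isProb
  have hCmeas := blC_meas hB (a := a) (b := b) (δ := δ) N
  have hYmeas := blY_meas hB (δ := δ) N
  have hMint := blM_integrable hB hδ (b := b) N
  obtain ⟨x, hx⟩ : ∃ x : ℝ, x = a - R + b * ((N : ℝ) * δ) := ⟨_, rfl⟩
  have hsplit : blC B a b δ N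
      = (blC B a b δ N ∩ {ω | blY B δ N ω ≤ x}) ∪ (blC B a b δ N ∩ {ω | x < blY B δ N ω}) := by
    ext ω
    by_cases h : blY B δ N ω ≤ x
    · simp [h, not_lt.mpr h]
    · simp [h, not_le.mp h]
  have hm1 : MeasurableSet (blC B a b δ N ∩ {ω | blY B δ N ω ≤ x}) :=
    hCmeas.inter (measurableSet_le hYmeas measurable_const)
  have hm2 : MeasurableSet (blC B a b δ N ∩ {ω | x < blY B δ N ω}) :=
    hCmeas.inter (measurableSet_lt measurable_const hYmeas)
  have hdisj : Disjoint (blC B a b δ N ∩ {ω | blY B δ N ω ≤ x})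
      (blC B a b δ N ∩ {ω | x < blY B δ N ω}) := by
    rw [Set.disjoint_left]
    rintro ω ⟨_, h1⟩ ⟨_, h2⟩
    have h1' : blY B δ N ω ≤ x := h1
    have h2' : x < blY B δ N ω := h2
    linarith
  have hIeq : ∫ ω in blC B a b δ N, blM B b δ N ω ∂ℙ
      = (∫ ω in blC B a b δ N ∩ {ω | blY B δ N ω ≤ x}, blM B b δ N ω ∂ℙ)
        + ∫ ω in blC B a b δ N ∩ {ω | x < blY B δ N ω}, blM B b δ N ω ∂ℙ := by
    rw [← setIntegral_union hdisj hm2 hMint.integrableOn hMint.integrableOn, ← hsplit]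
  rw [hIeq]
  have part1 : ∫ ω in blC B a b δ N ∩ {ω | blY B δ N ω ≤ x}, blM B b δ N ω ∂ℙ
      ≤ Real.exp (2 * b * (a - R)) := by
    have hle : ∀ ω ∈ blC B a b δ N ∩ {ω | blY B δ N ω ≤ x},
        blM B b δ N ω ≤ Real.exp (2 * b * (a - R)) := by
      rintro ω ⟨_, hY⟩
      have hY' : blY B δ N ω ≤ x := hY
      rw [blM]
      apply Real.exp_le_exp.2
      rw [hx] at hY'
      nlinarith
    calc ∫ ω in blC B a b δ N ∩ {ω | blY B δ N ω ≤ x}, blM B b δ N ω ∂ℙ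
        ≤ ∫ _ω in blC B a b δ N ∩ {ω | blY B δ N ω ≤ x}, Real.exp (2 * b * (a - R)) ∂ℙ :=
          setIntegral_mono_on hMint.integrableOn (integrableOn_const
            (measure_ne_top _ _)) hm1 hle
      _ = (ℙ (blC B a b δ N ∩ {ω | blY B δ N ω ≤ x})).toReal * Real.exp (2 * b * (a - R)) := by
          rw [setIntegral_const]; rfl
      _ ≤ 1 * Real.exp (2 * b * (a - R)) := by
          gcongr
          exact ENNReal.toReal_le_of_le_ofReal zero_le_one (by simpa using prob_le_one)
      _ = Real.exp (2 * b * (a - R)) := one_mul _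
  have part2 : ∫ ω in blC B a b δ N ∩ {ω | x < blY B δ N ω}, blM B b δ N ω ∂ℙ
      ≤ Real.exp (2 * a * b)
          * Real.exp (-b * (a - R + b * ((N : ℝ) * δ)) + b ^ 2 * ((N : ℝ) * δ) / 2) := by
    have hle : ∀ ω ∈ blC B a b δ N ∩ {ω | x < blY B δ N ω},
        blM B b δ N ω ≤ Real.exp (2 * a * b) :=
      fun ω hω => blM_le_on_blC hb hδ N ω hω.1
    calc ∫ ω in blC B a b δ N ∩ {ω | x < blY B δ N ω}, blM B b δ N ω ∂ℙ
        ≤ ∫ _ω in blC B a b δ N ∩ {ω | x < blY B δ N ω}, Real.exp (2 * a * b) ∂ℙ :=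
          setIntegral_mono_on hMint.integrableOn (integrableOn_const
            (measure_ne_top _ _)) hm2 hle
      _ = (ℙ (blC B a b δ N ∩ {ω | x < blY B δ N ω})).toReal * Real.exp (2 * a * b) := by
          rw [setIntegral_const]; rfl
      _ ≤ (ℙ {ω | x < blY B δ N ω}).toReal * Real.exp (2 * a * b) := by
          gcongr
          · exact measure_ne_top _ _
          · exact Set.inter_subset_right
      _ ≤ Real.exp (-b * x + b ^ 2 * ((N : ℝ) * δ) / 2) * Real.exp (2 * a * b) := by
          have h := rv_chernoff hYmeas (blY_map hB hδ N) hb.le x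
          rw [Real.coe_toNNReal _ (by positivity)] at h
          exact mul_le_mul_of_nonneg_right h (Real.exp_pos _).le
      _ = Real.exp (-b * x + b ^ 2 * ((N : ℝ) * δ) / 2) * Real.exp (2 * a * b) := rfl
      _ = Real.exp (2 * a * b)
            * Real.exp (-b * (a - R + b * ((N : ℝ) * δ)) + b ^ 2 * ((N : ℝ) * δ) / 2) := by
          rw [mul_comm, hx]
  linarith

end Lower
section LowerCombine
variable {Ω : Type*} [MeasureSpace Ω] {B : ℝ → Ω → ℝ} {a b δ : ℝ}

lemma blSumA_le_blE (hB : IsBrownianMotion B) (ha : 0 < a) (hδ : 0 < δ) (N : ℕ) :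
    ∑ n ∈ Finset.range N, (ℙ (blA B a b δ n)).toReal ≤ (ℙ (blE B a b δ)).toReal := by
  haveI := hB.isProb
  have h1 : ∑ n ∈ Finset.range N, ℙ (blA B a b δ n) ≤ ℙ (blE B a b δ) := by
    rw [← measure_biUnion_finset (fun m _ n _ hmn => blA_pairwise_disjoint hmn)
      (fun n _ => blA_meas hB n)]
    apply measure_mono
    rw [blE_eq_iUnion ha]
    exact Set.iUnion₂_subset (fun n _ => Set.subset_iUnion _ n)
  have h2 := ENNReal.toReal_mono (measure_ne_top _ _) h1
  rwa [ENNReal.toReal_sum (fun n _ => measure_ne_top _ _)] at h2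

lemma blLower (hB : IsBrownianMotion B) (ha : 0 < a) (hb : 0 < b) (hδ : 0 < δ)
    {c l : ℝ} (hc : 0 ≤ c) (hl : 0 ≤ l) (R : ℝ) (N : ℕ) :
    1 ≤ Real.exp (2 * a * b) * Real.exp (2 * b * c) * (ℙ (blE B a b δ)).toReal
        + (N : ℝ) * (Real.exp (2 * a * b) * Real.exp (-l * c + (2 * b + l) ^ 2 * δ / 2))
        + (Real.exp (2 * b * (a - R))
          + Real.exp (2 * a * b)
            * Real.exp (-b * (a - R + b * ((N : ℝ) * δ)) + b ^ 2 * ((N : ℝ) * δ) / 2)) := by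
  haveI := hB.isProb
  have hid := blIdentity hB ha hb hδ N
  have hsum : ∑ n ∈ Finset.range N, ∫ ω in blA B a b δ n, blM B b δ (n + 1) ω ∂ℙ
      ≤ Real.exp (2 * a * b) * Real.exp (2 * b * c)
          * (∑ n ∈ Finset.range N, (ℙ (blA B a b δ n)).toReal)
        + (N : ℝ) * (Real.exp (2 * a * b) * Real.exp (-l * c + (2 * b + l) ^ 2 * δ / 2)) := by
    calc ∑ n ∈ Finset.range N, ∫ ω in blA B a b δ n, blM B b δ (n + 1) ω ∂ℙ
        ≤ ∑ n ∈ Finset.range N,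
            (Real.exp (2 * a * b) * Real.exp (2 * b * c) * (ℙ (blA B a b δ n)).toReal
              + Real.exp (2 * a * b) * Real.exp (-l * c + (2 * b + l) ^ 2 * δ / 2)) :=
          Finset.sum_le_sum (fun n _ => blA_est hB hb hδ hc hl n)
      _ = Real.exp (2 * a * b) * Real.exp (2 * b * c)
            * (∑ n ∈ Finset.range N, (ℙ (blA B a b δ n)).toReal)
          + (N : ℝ) * (Real.exp (2 * a * b)
              * Real.exp (-l * c + (2 * b + l) ^ 2 * δ / 2)) := by
          rw [Finset.sum_add_distrib, ← Finset.mul_sum, Finset.sum_const, Finset.card_range,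
            nsmul_eq_mul]
  have hsumE : Real.exp (2 * a * b) * Real.exp (2 * b * c)
      * (∑ n ∈ Finset.range N, (ℙ (blA B a b δ n)).toReal)
      ≤ Real.exp (2 * a * b) * Real.exp (2 * b * c) * (ℙ (blE B a b δ)).toReal := by
    have := blSumA_le_blE hB ha hδ (b := b) N
    have hpos : (0:ℝ) < Real.exp (2 * a * b) * Real.exp (2 * b * c) := by positivity
    nlinarith
  have htail := blC_est hB hb hδ (a := a) R N
  linarith

end LowerCombine
section Limits
open Filter

lemma bl_t1 {m : ℝ} (hm : 0 < m) :
    Tendsto (fun u : ℝ => u ^ 2 * Real.exp (-(m * u))) atTop (nhds 0) := by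
  have h0 := Real.tendsto_pow_mul_exp_neg_atTop_nhds_zero 2
  have hcomp : Tendsto (fun u : ℝ => (m * u) ^ 2 * Real.exp (-(m * u))) atTop (nhds 0) :=
    h0.comp (Tendsto.const_mul_atTop hm tendsto_id)
  have := hcomp.const_mul ((m ^ 2)⁻¹)
  rw [mul_zero] at this
  refine this.congr (fun u => ?_)
  field_simp

lemma bl_t2 {m : ℝ} (hm : 0 < m) (C : ℝ) :
    Tendsto (fun u : ℝ => Real.exp (C - m * u)) atTop (nhds 0) := by
  apply Real.tendsto_exp_atBot.comp
  have h1 : Tendsto (fun u : ℝ => m * u) atTop atTop :=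
    Tendsto.const_mul_atTop hm tendsto_id
  have h2 : Tendsto (fun u : ℝ => -(m * u)) atTop atBot := tendsto_neg_atTop_atBot.comp h1
  have h3 := tendsto_atBot_add_const_left atTop C h2
  refine h3.congr (fun u => ?_)
  ring

lemma bl_t3 : Tendsto (fun u : ℝ => Real.exp (2 / u)) atTop (nhds 1) := by
  have h1 : Tendsto (fun u : ℝ => 2 / u) atTop (nhds 0) :=
    Tendsto.div_atTop tendsto_const_nhds tendsto_id
  have := (Real.continuous_exp.tendsto 0).comp h1
  rwa [Real.exp_zero] at this

end Limits
section MainLimit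
open Filter
variable {Ω : Type*} [MeasureSpace Ω] {B : ℝ → Ω → ℝ} {a b : ℝ}

lemma bl_t3' (d : ℝ) : Tendsto (fun u : ℝ => Real.exp (d / u)) atTop (nhds 1) := by
  have h1 : Tendsto (fun u : ℝ => d / u) atTop (nhds 0) :=
    Tendsto.div_atTop tendsto_const_nhds tendsto_id
  have := (Real.continuous_exp.tendsto 0).comp h1
  rwa [Real.exp_zero] at this

lemma bl_err_tendsto (C m d : ℝ) (hm : 0 < m) :
    Tendsto (fun u : ℝ => C * (u ^ 2 * Real.exp (-(m * u)) * Real.exp (d / u)))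
      atTop (nhds 0) := by
  have h := (bl_t1 hm).mul (bl_t3' d)
  rw [zero_mul] at h
  have := h.const_mul C
  rwa [mul_zero] at this

lemma h42 (k : ℕ) : (((4:ℕ) ^ k : ℕ) : ℝ) * ((1:ℝ) / 2 ^ k) = 2 ^ k := by
  push_cast
  rw [show (4:ℝ) = 2 ^ 2 by norm_num, ← pow_mul, two_mul, pow_add]
  field_simp

lemma h42' (k : ℕ) : (((4:ℕ) ^ k : ℕ) : ℝ) = ((2:ℝ) ^ k) ^ 2 := by
  push_cast
  rw [show (4:ℝ) = 2 ^ 2 by norm_num, ← pow_mul, mul_comm, pow_mul]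

lemma blP_ge (hB : IsBrownianMotion B) (ha : 0 < a) (hb : 0 < b) :
    Real.exp (-(2 * a * b)) ≤ (ℙ (⋃ k : ℕ, blE B a b ((1:ℝ) / 2 ^ k))).toReal := by
  haveI := hB.isProb
  set P := (ℙ (⋃ k : ℕ, blE B a b ((1:ℝ) / 2 ^ k))).toReal with hPdef
  suffices h : ∀ c : ℝ, 0 < c → 1 ≤ Real.exp (2 * a * b) * Real.exp (2 * b * c) * P by
    have hseq : ∀ n : ℕ,
        Real.exp (-(2 * a * b)) * Real.exp (-(2 * b * (1 / ((n : ℝ) + 1)))) ≤ P := by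
      intro n
      have hc : (0:ℝ) < 1 / ((n : ℝ) + 1) := by positivity
      have h1 := h _ hc
      set S := 2 * a * b + 2 * b * (1 / ((n : ℝ) + 1)) with hS
      have key : 1 ≤ Real.exp S * P := by
        rw [hS, Real.exp_add]
        linarith [h1, mul_assoc (Real.exp (2 * a * b))
          (Real.exp (2 * b * (1 / ((n : ℝ) + 1)))) P]
      have h2 := mul_le_mul_of_nonneg_left key (Real.exp_pos (-S)).le
      rw [mul_one, ← mul_assoc, ← Real.exp_add, neg_add_cancel, Real.exp_zero, one_mul] at h2
      rw [← Real.exp_add]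
      rw [show -(2 * a * b) + -(2 * b * (1 / ((n : ℝ) + 1))) = -S by rw [hS]; ring]
      exact h2
    have htend : Tendsto
        (fun n : ℕ => Real.exp (-(2 * a * b)) * Real.exp (-(2 * b * (1 / ((n : ℝ) + 1)))))
        atTop (nhds (Real.exp (-(2 * a * b)))) := by
      have h1 : Tendsto (fun n : ℕ => (1:ℝ) / ((n : ℝ) + 1)) atTop (nhds 0) :=
        tendsto_one_div_add_atTop_nhds_zero_nat
      have h2 : Tendsto (fun n : ℕ => Real.exp (-(2 * b * (1 / ((n : ℝ) + 1)))))
          atTop (nhds 1) := by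
        have hcont : Continuous fun x : ℝ => Real.exp (-(2 * b * x)) := by
          fun_prop
        have := (hcont.tendsto 0).comp h1
        simpa [Function.comp_def] using this
      have := h2.const_mul (Real.exp (-(2 * a * b)))
      rwa [mul_one] at this
    exact le_of_tendsto htend (Eventually.of_forall hseq)
  intro c hc
  have hu2 : Tendsto (fun k : ℕ => (2:ℝ) ^ k) atTop atTop :=
    tendsto_pow_atTop_atTop_of_one_lt one_lt_two
  -- the error terms
  set E1 : ℕ → ℝ := fun k => (((4:ℕ) ^ k : ℕ) : ℝ)
      * (Real.exp (2 * a * b)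
        * Real.exp (-(c * 2 ^ k) * c + (2 * b + c * 2 ^ k) ^ 2 * ((1:ℝ) / 2 ^ k) / 2))
    with hE1def
  set E2 : ℕ → ℝ := fun k => Real.exp (2 * b * (a - b * 2 ^ k / 4)) with hE2def
  set E3 : ℕ → ℝ := fun k => Real.exp (2 * a * b)
      * Real.exp (-b * (a - b * 2 ^ k / 4 + b * ((((4:ℕ) ^ k : ℕ) : ℝ) * ((1:ℝ) / 2 ^ k)))
        + b ^ 2 * ((((4:ℕ) ^ k : ℕ) : ℝ) * ((1:ℝ) / 2 ^ k)) / 2) with hE3def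
  have hlow : ∀ k : ℕ, 1 - (E1 k + (E2 k + E3 k))
      ≤ Real.exp (2 * a * b) * Real.exp (2 * b * c) * P := by
    intro k
    have hδ : (0:ℝ) < 1 / 2 ^ k := by positivity
    have hl : (0:ℝ) ≤ c * 2 ^ k := by positivity
    have h := blLower hB ha hb hδ hc.le hl (b * 2 ^ k / 4) ((4:ℕ) ^ k)
    have hPk : (ℙ (blE B a b ((1:ℝ) / 2 ^ k))).toReal ≤ P :=
      ENNReal.toReal_mono (measure_ne_top _ _) (measure_mono (Set.subset_iUnion (fun k : ℕ => blE B a b ((1:ℝ) / 2 ^ k)) k))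
    have hEpos : (0:ℝ) < Real.exp (2 * a * b) * Real.exp (2 * b * c) := by positivity
    have h' : 1 ≤ Real.exp (2 * a * b) * Real.exp (2 * b * c) * P
        + (E1 k + (E2 k + E3 k)) := by
      rw [hE1def, hE2def, hE3def]
      simp only []
      nlinarith [h, hPk, hEpos]
    linarith
  have herr : Tendsto (fun k => E1 k + (E2 k + E3 k)) atTop (nhds 0) := by
    have hA : Tendsto E1 atTop (nhds 0) := by
      have hF := bl_err_tendsto (Real.exp (2 * a * b) * Real.exp (2 * b * c))
        (c ^ 2 / 2) (2 * b ^ 2) (by positivity)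
      have := hF.comp hu2
      refine this.congr (fun k => ?_)
      show Real.exp (2 * a * b) * Real.exp (2 * b * c)
          * (((2:ℝ) ^ k) ^ 2 * Real.exp (-(c ^ 2 / 2 * 2 ^ k)) * Real.exp (2 * b ^ 2 / 2 ^ k))
          = E1 k
      rw [hE1def]
      simp only []
      rw [h42']
      have hu : ((2:ℝ) ^ k) ≠ 0 := by positivity
      have hexp : Real.exp (-(c * 2 ^ k) * c + (2 * b + c * 2 ^ k) ^ 2 * ((1:ℝ) / 2 ^ k) / 2)
          = Real.exp (2 * b * c) * Real.exp (-(c ^ 2 / 2 * 2 ^ k))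
            * Real.exp (2 * b ^ 2 / 2 ^ k) := by
        rw [← Real.exp_add, ← Real.exp_add]
        congr 1
        field_simp
        ring
      rw [hexp]
      ring
    have hB1 : Tendsto E2 atTop (nhds 0) := by
      have := (bl_t2 (m := b ^ 2 / 2) (by positivity) (2 * a * b)).comp hu2
      refine this.congr (fun k => ?_)
      show Real.exp (2 * a * b - b ^ 2 / 2 * 2 ^ k) = E2 k
      rw [hE2def]
      congr 1
      ring
    have hB2 : Tendsto E3 atTop (nhds 0) := by
      have hF := (bl_t2 (m := b ^ 2 / 4) (by positivity) (-(a * b))).comp hu2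
      have := hF.const_mul (Real.exp (2 * a * b))
      rw [mul_zero] at this
      refine this.congr (fun k => ?_)
      show Real.exp (2 * a * b) * Real.exp (-(a * b) - b ^ 2 / 4 * 2 ^ k) = E3 k
      rw [hE3def]
      simp only []
      congr 1
      rw [h42]
      ring
    have := hA.add (hB1.add hB2)
    simpa using this
  have hone : Tendsto (fun k => 1 - (E1 k + (E2 k + E3 k))) atTop (nhds 1) := by
    have := (tendsto_const_nhds (x := (1:ℝ)) (f := atTop (α := ℕ))).sub herr
    simpa using this
  exact le_of_tendsto hone (Eventually.of_forall hlow)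

end MainLimit
section Final
open Filter
variable {Ω : Type*} [MeasureSpace Ω] {B : ℝ → Ω → ℝ} {a b : ℝ}

lemma blE_mono (hB : IsBrownianMotion B) (k : ℕ) :
    blE B a b ((1:ℝ) / 2 ^ k) ⊆ blE B a b ((1:ℝ) / 2 ^ (k + 1)) := by
  rintro ω ⟨n, hn⟩
  refine ⟨2 * n, ?_⟩
  have htime : ((2 * n : ℕ) : ℝ) * ((1:ℝ) / 2 ^ (k + 1)) = (n : ℝ) * ((1:ℝ) / 2 ^ k) := by
    push_cast
    field_simp
    ring
  show a + b * (((2 * n : ℕ) : ℝ) * ((1:ℝ) / 2 ^ (k + 1))) < blY B ((1:ℝ) / 2 ^ (k + 1)) (2 * n) ω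
  have hY : blY B ((1:ℝ) / 2 ^ (k + 1)) (2 * n) ω = blY B ((1:ℝ) / 2 ^ k) n ω := by
    unfold blY
    rw [htime]
  rw [htime, hY]
  exact hn

lemma blU_measure (hB : IsBrownianMotion B) (ha : 0 < a) (hb : 0 < b) :
    ℙ (⋃ k : ℕ, blE B a b ((1:ℝ) / 2 ^ k)) = ENNReal.ofReal (Real.exp (-(2 * a * b))) := by
  haveI := hB.isProb
  apply le_antisymm
  · have hmono : Monotone fun k : ℕ => blE B a b ((1:ℝ) / 2 ^ k) := by
      apply monotone_nat_of_le_succ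
      exact fun k => blE_mono hB k
    rw [hmono.directed_le.measure_iUnion]
    exact iSup_le fun k => blE_measure_le hB ha hb (by positivity)
  · have h := blP_ge hB ha hb
    have hne : ℙ (⋃ k : ℕ, blE B a b ((1:ℝ) / 2 ^ k)) ≠ ⊤ := measure_ne_top _ _
    rw [← ENNReal.ofReal_toReal hne]
    exact ENNReal.ofReal_le_ofReal h

lemma blU_iff (hB : IsBrownianMotion B) (ha : 0 < a) (hb : 0 < b) (ω : Ω)
    (h0 : B 0 ω = 0) (hcont : Continuous fun t => B t ω) :
    ω ∈ (⋃ k : ℕ, blE B a b ((1:ℝ) / 2 ^ k)) ↔ ∃ t : ℝ, 0 ≤ t ∧ a + b * t < B t ω := by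
  constructor
  · rintro hω
    rw [Set.mem_iUnion] at hω
    obtain ⟨k, n, hn⟩ := hω
    refine ⟨(n : ℝ) * ((1:ℝ) / 2 ^ k), by positivity, ?_⟩
    have : blY B ((1:ℝ) / 2 ^ k) n ω = B ((n : ℝ) * ((1:ℝ) / 2 ^ k)) ω := by
      unfold blY
      rw [h0, sub_zero]
    rw [← this]
    exact hn
  · rintro ⟨t, ht0, ht⟩
    have hfc : Continuous fun s : ℝ => B s ω - (a + b * s) := by
      apply hcont.sub
      fun_prop
    have hopen : IsOpen {s : ℝ | 0 < B s ω - (a + b * s)} :=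
      isOpen_lt continuous_const hfc
    have htmem : t ∈ {s : ℝ | 0 < B s ω - (a + b * s)} := by
      simp only [Set.mem_setOf_eq]
      linarith
    obtain ⟨ε, hε, hball⟩ := Metric.isOpen_iff.mp hopen t htmem
    obtain ⟨k, hk⟩ : ∃ k : ℕ, ((1:ℝ) / 2) ^ k < ε := exists_pow_lt_of_lt_one hε (by norm_num)
    have hδpos : (0:ℝ) < (1:ℝ) / 2 ^ k := by positivity
    have hδeq : ((1:ℝ) / 2) ^ k = (1:ℝ) / 2 ^ k := by
      rw [div_pow, one_pow]
    rw [hδeq] at hk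
    set δ : ℝ := (1:ℝ) / 2 ^ k with hδdef
    set n : ℕ := ⌈t / δ⌉₊ with hndef
    have hn1 : t ≤ (n : ℝ) * δ := by
      have := Nat.le_ceil (t / δ)
      calc t = (t / δ) * δ := by field_simp
        _ ≤ (n : ℝ) * δ := by
            apply mul_le_mul_of_nonneg_right this hδpos.le
    have hn2 : (n : ℝ) * δ < t + ε := by
      have h1 : ((n : ℕ) : ℝ) < t / δ + 1 := Nat.ceil_lt_add_one (by positivity)
      have h2 : (n : ℝ) * δ < (t / δ + 1) * δ := by
        apply mul_lt_mul_of_pos_right h1 hδpos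
      calc (n : ℝ) * δ < (t / δ + 1) * δ := h2
        _ = t + δ := by field_simp
        _ < t + ε := by linarith
    have hmem : (n : ℝ) * δ ∈ Metric.ball t ε := by
      rw [Metric.mem_ball, Real.dist_eq, abs_lt]
      constructor <;> linarith
    have hf := hball hmem
    simp only [Set.mem_setOf_eq] at hf
    rw [Set.mem_iUnion]
    refine ⟨k, n, ?_⟩
    show a + b * ((n : ℝ) * δ) < blY B δ n ω
    unfold blY
    rw [h0, sub_zero]
    linarith

theorem bachelier_levy_infinite_horizon' {Ω : Type*} [MeasureSpace Ω] (B : ℝ → Ω → ℝ)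
    (hB : IsBrownianMotion B) (a b : ℝ) (ha : 0 < a) (hb : 0 < b) :
    ℙ {ω | ∀ t : ℝ, 0 ≤ t → B t ω ≤ a + b * t} =
      ENNReal.ofReal (1 - Real.exp (-2 * a * b)) := by
  haveI := hB.isProb
  set U := ⋃ k : ℕ, blE B a b ((1:ℝ) / 2 ^ k) with hUdef
  have hUmeas : MeasurableSet U := MeasurableSet.iUnion (fun k => blE_meas hB)
  have hae : ({ω | ∀ t : ℝ, 0 ≤ t → B t ω ≤ a + b * t} : Set Ω) =ᵐ[ℙ] (Uᶜ : Set Ω) := by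
    rw [Filter.eventuallyEq_set]
    filter_upwards [hB.start, hB.cont] with ω h0 hcont
    rw [Set.mem_compl_iff]
    constructor
    · intro hG hU
      obtain ⟨t, ht0, ht⟩ := (blU_iff hB ha hb ω h0 hcont).mp hU
      exact absurd (hG t ht0) (not_le.mpr ht)
    · intro hU t ht0
      by_contra hlt
      exact hU ((blU_iff hB ha hb ω h0 hcont).mpr ⟨t, ht0, not_le.mp hlt⟩)
  rw [measure_congr hae, measure_compl hUmeas (measure_ne_top _ _), measure_univ,
    hUdef, blU_measure hB ha hb]
  rw [show (-2 : ℝ) * a * b = -(2 * a * b) by ring]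
  rw [ENNReal.ofReal_sub _ (Real.exp_pos _).le, ENNReal.ofReal_one]

end Final

/-- For `a > 0` and `b > 0`, `P(B t ≤ a + b t for all t ≥ 0) = 1 - e^{-2ab}`. -/
theorem bachelier_levy_infinite_horizon {Ω : Type*} [MeasureSpace Ω] (B : ℝ → Ω → ℝ)
    (hB : IsBrownianMotion B) (a b : ℝ) (ha : 0 < a) (hb : 0 < b) :
    ℙ {ω | ∀ t : ℝ, 0 ≤ t → B t ω ≤ a + b * t} =
      ENNReal.ofReal (1 - Real.exp (-2 * a * b)) :=
  bachelier_levy_infinite_horizon' B hB a b ha hb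
end

section
/- The function p(m) = (2/(1+s̄))Φ(√s̄·m)φ(m) + (2s̄/(1+s̄))m²Φ(√s̄·m)φ(m) + (2√s̄/(1+s̄))m·φ(√s̄·m)φ(m), for fixed s̄ ∈ (0,1], is a probability density: it is nonnegative and integrates to 1 over ℝ. -/
open MeasureTheory ProbabilityTheory Real

open Set Filter

lemma stdPdf_eq_gauss : stdPdf = gaussianPDFReal 0 1 := by
  funext x
  simp [stdPdf, gaussianPDFReal, div_eq_inv_mul]

lemma stdPdf_nonneg (x : ℝ) : 0 ≤ stdPdf x := by
  unfold stdPdf; positivity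

lemma stdPdf_even (x : ℝ) : stdPdf (-x) = stdPdf x := by
  simp [stdPdf, neg_sq]

lemma continuous_stdPdf : Continuous stdPdf := by
  unfold stdPdf; fun_prop

lemma integrable_stdPdf : Integrable stdPdf := by
  rw [stdPdf_eq_gauss]; exact integrable_gaussianPDFReal 0 1

lemma integral_stdPdf : ∫ x, stdPdf x = 1 := by
  rw [stdPdf_eq_gauss]; exact integral_gaussianPDFReal_eq_one 0 one_ne_zero

lemma stdPdf_le (x : ℝ) : stdPdf x ≤ (Real.sqrt (2 * Real.pi))⁻¹ := by
  rw [stdPdf, div_eq_mul_inv]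
  have h1 : Real.exp (-x ^ 2 / 2) ≤ 1 := by
    rw [Real.exp_le_one_iff]; nlinarith [sq_nonneg x]
  have h2 : (0:ℝ) < (Real.sqrt (2 * Real.pi))⁻¹ := by positivity
  nlinarith

lemma integrable_sq_stdPdf : Integrable (fun x : ℝ => x ^ 2 * stdPdf x) := by
  have h := (integrable_rpow_mul_exp_neg_mul_sq (b := 1/2) (by norm_num)
    (s := 2) (by norm_num)).div_const (Real.sqrt (2 * Real.pi))
  refine h.congr (Filter.Eventually.of_forall fun x => ?_)
  simp only [stdPdf, Real.rpow_two]
  ring_nf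

lemma integrable_abs_stdPdf : Integrable (fun x : ℝ => |x| * stdPdf x) := by
  have h := (integrable_rpow_mul_exp_neg_mul_sq (b := 1/2) (by norm_num)
    (s := 1) (by norm_num)).div_const (Real.sqrt (2 * Real.pi))
  have h2 : Integrable (fun x : ℝ => x * stdPdf x) := by
    refine h.congr (Filter.Eventually.of_forall fun x => ?_)
    simp only [stdPdf, Real.rpow_one]
    ring_nf
  exact h2.abs.congr (Filter.Eventually.of_forall fun x => by
    simp only [abs_mul, abs_of_nonneg (stdPdf_nonneg x)])

lemma stdCDF_nonneg (x : ℝ) : 0 ≤ stdCDF x :=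
  setIntegral_nonneg measurableSet_Iic (fun u _ => stdPdf_nonneg u)

lemma monotone_stdCDF : Monotone stdCDF := fun a b hab =>
  setIntegral_mono_set integrable_stdPdf.integrableOn
    (Filter.Eventually.of_forall stdPdf_nonneg)
    (HasSubset.Subset.eventuallyLE (Iic_subset_Iic.mpr hab))

lemma measurable_stdCDF : Measurable stdCDF := monotone_stdCDF.measurable

lemma stdCDF_add_neg (x : ℝ) : stdCDF x + stdCDF (-x) = 1 := by
  have h1 : stdCDF (-x) = ∫ u in Ioi x, stdPdf u := by
    rw [stdCDF]
    rw [show (∫ u in Iic (-x), stdPdf u) = ∫ u in Iic (-x), stdPdf (-u) from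
      setIntegral_congr_fun measurableSet_Iic (fun u _ => (stdPdf_even u).symm)]
    rw [integral_comp_neg_Iic, neg_neg]
  rw [stdCDF, h1, intervalIntegral.integral_Iic_add_Ioi integrable_stdPdf.integrableOn
    integrable_stdPdf.integrableOn, integral_stdPdf]

lemma stdCDF_neg (x : ℝ) : stdCDF (-x) = 1 - stdCDF x := by
  have := stdCDF_add_neg x; linarith

lemma stdCDF_le_one (x : ℝ) : stdCDF x ≤ 1 := by
  have := stdCDF_add_neg x
  have := stdCDF_nonneg (-x)
  linarith

lemma hasDerivAt_stdPdf (x : ℝ) : HasDerivAt stdPdf (-x * stdPdf x) x := by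
  have h1 : HasDerivAt (fun y : ℝ => -y ^ 2 / 2) (-x) x := by
    have := ((hasDerivAt_pow 2 x).neg.div_const 2)
    refine this.congr_deriv ?_
    simp; ring
  have h2 := (h1.exp).div_const (Real.sqrt (2 * Real.pi))
  refine h2.congr_deriv ?_
  simp only [stdPdf]
  ring

lemma tendsto_exp_neg_sq_div (k : ℝ) (hk : 0 < k) (l : Filter ℝ)
    (hl : Tendsto (fun x : ℝ => x ^ 2) l atTop) :
    Tendsto (fun x : ℝ => Real.exp (-x ^ 2 / k)) l (nhds 0) := by
  apply Real.tendsto_exp_atBot.comp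
  have h : Tendsto (fun y : ℝ => -y / k) atTop atBot := by
    apply Tendsto.atBot_div_const hk
    exact tendsto_neg_atTop_atBot
  exact h.comp hl

lemma tendsto_sq_atTop_atTop : Tendsto (fun x : ℝ => x ^ 2) atTop atTop := by
  exact tendsto_pow_atTop (by norm_num)

lemma tendsto_sq_atBot_atTop : Tendsto (fun x : ℝ => x ^ 2) atBot atTop := by
  have h := tendsto_sq_atTop_atTop.comp tendsto_neg_atBot_atTop
  refine h.congr (fun x => ?_)
  simp [Function.comp, neg_sq]

lemma tendsto_stdPdf (l : Filter ℝ) (hl : Tendsto (fun x : ℝ => x ^ 2) l atTop) :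
    Tendsto stdPdf l (nhds 0) := by
  have h := (tendsto_exp_neg_sq_div 2 (by norm_num) l hl).div_const (Real.sqrt (2 * Real.pi))
  rw [zero_div] at h
  exact h

lemma tendsto_mul_stdPdf (l : Filter ℝ) (hl : Tendsto (fun x : ℝ => x ^ 2) l atTop) :
    Tendsto (fun x => -x * stdPdf x) l (nhds 0) := by
  have htend : Tendsto (fun x : ℝ => Real.exp (-x ^ 2 / 4) / Real.sqrt (2 * Real.pi)) l (nhds 0) := by
    have h := (tendsto_exp_neg_sq_div 4 (by norm_num) l hl).div_const (Real.sqrt (2 * Real.pi))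
    rw [zero_div] at h
    exact h
  refine squeeze_zero_norm (fun x => ?_) htend
  have h1 : |x| ≤ Real.exp (x ^ 2 / 4) := by
    have h2 : 1 + x ^ 2 / 4 ≤ Real.exp (x ^ 2 / 4) := by
      have := Real.add_one_le_exp (x ^ 2 / 4); linarith
    nlinarith [sq_nonneg (|x| / 2 - 1), sq_abs x]
  have h3 : (0:ℝ) < Real.sqrt (2 * Real.pi) := by positivity
  rw [Real.norm_eq_abs, abs_mul, abs_neg]
  have h4 : |stdPdf x| = Real.exp (-x ^ 2 / 2) / Real.sqrt (2 * Real.pi) := by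
    rw [abs_of_nonneg (stdPdf_nonneg x)]; rfl
  rw [h4, ← mul_div_assoc, div_le_div_iff_of_pos_right h3]
  calc |x| * Real.exp (-x ^ 2 / 2) ≤ Real.exp (x ^ 2 / 4) * Real.exp (-x ^ 2 / 2) := by
        apply mul_le_mul_of_nonneg_right h1 (Real.exp_nonneg _)
    _ = Real.exp (-x ^ 2 / 4) := by rw [← Real.exp_add]; ring_nf

noncomputable def millsF (t : ℝ) : ℝ := -t * stdPdf t / (1 + t ^ 2)

lemma hasDerivAt_millsF (u : ℝ) :
    HasDerivAt millsF (stdPdf u * (1 - 2 / (1 + u ^ 2) ^ 2)) u := by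
  have hd : (1 : ℝ) + u ^ 2 ≠ 0 := by positivity
  have hn : HasDerivAt (fun t : ℝ => -t * stdPdf t) (stdPdf u * (u ^ 2 - 1)) u := by
    have := (hasDerivAt_id u).neg.mul (hasDerivAt_stdPdf u)
    refine this.congr_deriv ?_; simp; ring
  have hden : HasDerivAt (fun t : ℝ => 1 + t ^ 2) (2 * u) u := by
    have := (hasDerivAt_pow 2 u).const_add 1
    refine this.congr_deriv ?_
    simp
    try ring
  have h := hn.div hden hd
  refine h.congr_deriv ?_
  field_simp
  ring

lemma integrable_millsF' : Integrable (fun u : ℝ => stdPdf u * (1 - 2 / (1 + u ^ 2) ^ 2)) := by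
  refine integrable_stdPdf.mono' ?_ (Filter.Eventually.of_forall fun u => ?_)
  · have hc : Continuous fun u : ℝ => 2 / (1 + u ^ 2) ^ 2 :=
      continuous_const.div (by fun_prop) (fun u => by positivity)
    exact (continuous_stdPdf.mul (continuous_const.sub hc)).aestronglyMeasurable
  · rw [Real.norm_eq_abs, abs_mul, abs_of_nonneg (stdPdf_nonneg u)]
    have h1 : |1 - 2 / (1 + u ^ 2) ^ 2| ≤ 1 := by
      rw [abs_le]
      constructor
      · have h2 : 2 / (1 + u ^ 2) ^ 2 ≤ 2 := by
          rw [div_le_iff₀ (by positivity)]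
          nlinarith [sq_nonneg u, sq_nonneg (u ^ 2)]
        linarith
      · have : 0 < 2 / (1 + u ^ 2) ^ 2 := by positivity
        linarith
    exact mul_le_of_le_one_right (stdPdf_nonneg u) h1

lemma tendsto_millsF_atBot : Tendsto millsF atBot (nhds 0) := by
  have htend : Tendsto (fun t : ℝ => ‖-t * stdPdf t‖) atBot (nhds 0) := by
    have h := (tendsto_mul_stdPdf atBot tendsto_sq_atBot_atTop).norm
    simpa using h
  refine squeeze_zero_norm (fun t => ?_) htend
  rw [millsF, norm_div]
  apply div_le_self (norm_nonneg _) ?_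
  rw [Real.norm_eq_abs, abs_of_pos (by positivity : (0:ℝ) < 1 + t ^ 2)]
  nlinarith [sq_nonneg t]

lemma millsF_le_stdCDF (t : ℝ) : millsF t ≤ stdCDF t := by
  have hkey : ∫ u in Iic t, stdPdf u * (1 - 2 / (1 + u ^ 2) ^ 2) = millsF t - 0 :=
    integral_Iic_of_hasDerivAt_of_tendsto' (fun u _ => hasDerivAt_millsF u)
      integrable_millsF'.integrableOn tendsto_millsF_atBot
  have hsub : stdCDF t - millsF t =
      ∫ u in Iic t, (stdPdf u - stdPdf u * (1 - 2 / (1 + u ^ 2) ^ 2)) := by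
    rw [integral_sub integrable_stdPdf.integrableOn integrable_millsF'.integrableOn, stdCDF, hkey]
    ring
  have hpos : 0 ≤ ∫ u in Iic t, (stdPdf u - stdPdf u * (1 - 2 / (1 + u ^ 2) ^ 2)) := by
    apply setIntegral_nonneg measurableSet_Iic
    intro u _
    have he : stdPdf u - stdPdf u * (1 - 2 / (1 + u ^ 2) ^ 2) =
        stdPdf u * (2 / (1 + u ^ 2) ^ 2) := by ring
    rw [he]
    exact mul_nonneg (stdPdf_nonneg u) (by positivity)
  linarith

lemma mills (t : ℝ) : 0 ≤ (1 + t ^ 2) * stdCDF t + t * stdPdf t := by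
  have h := millsF_le_stdCDF t
  have hpos : (0 : ℝ) < 1 + t ^ 2 := by positivity
  have h2 := mul_le_mul_of_nonneg_left h hpos.le
  have h3 : (1 + t ^ 2) * millsF t = -t * stdPdf t := by
    rw [millsF]; field_simp
  rw [h3] at h2
  linarith

lemma integral_sq_stdPdf : ∫ x, x ^ 2 * stdPdf x = 1 := by
  have hderiv : ∀ x, HasDerivAt (fun t : ℝ => -t * stdPdf t) (x ^ 2 * stdPdf x - stdPdf x) x := by
    intro x
    have := (hasDerivAt_id x).neg.mul (hasDerivAt_stdPdf x)
    refine this.congr_deriv ?_; simp; ring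
  have hint : Integrable (fun x : ℝ => x ^ 2 * stdPdf x - stdPdf x) :=
    integrable_sq_stdPdf.sub integrable_stdPdf
  have h := integral_of_hasDerivAt_of_tendsto hderiv hint
    (tendsto_mul_stdPdf atBot tendsto_sq_atBot_atTop)
    (tendsto_mul_stdPdf atTop tendsto_sq_atTop_atTop)
  rw [integral_sub integrable_sq_stdPdf integrable_stdPdf, integral_stdPdf] at h
  simp at h
  linarith

lemma integral_comp_neg' (f : ℝ → ℝ) : ∫ x, f (-x) = ∫ x, f x := by
  have A : MeasurableEmbedding fun x : ℝ => -x := (Homeomorph.neg ℝ).measurableEmbedding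
  have h := A.integral_map (μ := (volume : Measure ℝ)) (g := f)
  rw [Measure.map_neg_eq_self (volume : Measure ℝ)] at h
  simpa using h.symm

/-- For fixed `s̄ ∈ (0,1]`, the function
`p m = (2/(1+s̄)) Φ(√s̄ m) φ(m) + (2s̄/(1+s̄)) m² Φ(√s̄ m) φ(m) + (2√s̄/(1+s̄)) m φ(√s̄ m) φ(m)`
is a probability density: nonnegative and integrating to `1`. -/
theorem slepian_density_is_probability_density (sb : ℝ) (hsb : sb ∈ Set.Ioc (0 : ℝ) 1)
    (p : ℝ → ℝ)
    (hp : ∀ m, p m = (2 / (1 + sb)) * stdCDF (Real.sqrt sb * m) * stdPdf m +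
      (2 * sb / (1 + sb)) * m ^ 2 * stdCDF (Real.sqrt sb * m) * stdPdf m +
      (2 * Real.sqrt sb / (1 + sb)) * m * stdPdf (Real.sqrt sb * m) * stdPdf m) :
    (∀ m, 0 ≤ p m) ∧ (∫ m, p m) = 1 := by
  obtain ⟨hsb0, _⟩ := hsb
  have hc : 0 < Real.sqrt sb := Real.sqrt_pos.mpr hsb0
  have hcsq : Real.sqrt sb ^ 2 = sb := Real.sq_sqrt hsb0.le
  have hs1 : (0 : ℝ) < 1 + sb := by linarith
  constructor
  · intro m
    have hb := mills (Real.sqrt sb * m)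
    have heq : p m = (2 / (1 + sb)) * (stdPdf m *
        ((1 + (Real.sqrt sb * m) ^ 2) * stdCDF (Real.sqrt sb * m) +
          (Real.sqrt sb * m) * stdPdf (Real.sqrt sb * m))) := by
      rw [hp, mul_pow, hcsq]; ring
    rw [heq]
    exact mul_nonneg (by positivity) (mul_nonneg (stdPdf_nonneg m) hb)
  · set f12 : ℝ → ℝ := fun m =>
      (2 / (1 + sb) + 2 * sb / (1 + sb) * m ^ 2) * (stdCDF (Real.sqrt sb * m) * stdPdf m)
      with hf12def
    set f3 : ℝ → ℝ := fun m => m * stdPdf (Real.sqrt sb * m) * stdPdf m with hf3def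
    have hpeq : ∀ m, p m = f12 m + (2 * Real.sqrt sb / (1 + sb)) * f3 m := fun m => by
      rw [hp, hf12def, hf3def]; ring
    have hmeas : AEStronglyMeasurable (fun m => stdCDF (Real.sqrt sb * m)) volume :=
      (measurable_stdCDF.comp (measurable_const_mul _)).aestronglyMeasurable
    have hint1 : Integrable (fun m => stdCDF (Real.sqrt sb * m) * stdPdf m) := by
      refine integrable_stdPdf.mono' (hmeas.mul continuous_stdPdf.aestronglyMeasurable)
        (Filter.Eventually.of_forall fun m => ?_)
      rw [Real.norm_eq_abs, abs_mul, abs_of_nonneg (stdCDF_nonneg _),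
        abs_of_nonneg (stdPdf_nonneg _)]
      exact mul_le_of_le_one_left (stdPdf_nonneg m) (stdCDF_le_one _)
    have hint2 : Integrable (fun m => m ^ 2 * (stdCDF (Real.sqrt sb * m) * stdPdf m)) := by
      refine integrable_sq_stdPdf.mono'
        (((measurable_id.pow_const 2).aestronglyMeasurable).mul
          (hmeas.mul continuous_stdPdf.aestronglyMeasurable))
        (Filter.Eventually.of_forall fun m => ?_)
      rw [Real.norm_eq_abs, abs_mul, abs_of_nonneg (sq_nonneg m), abs_mul, abs_of_nonneg (stdCDF_nonneg _),
        abs_of_nonneg (stdPdf_nonneg _)]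
      exact mul_le_mul_of_nonneg_left
        (mul_le_of_le_one_left (stdPdf_nonneg m) (stdCDF_le_one _)) (sq_nonneg m)
    have hintf12 : Integrable f12 := by
      have he : f12 = fun m => (2 / (1 + sb)) * (stdCDF (Real.sqrt sb * m) * stdPdf m) +
          (2 * sb / (1 + sb)) * (m ^ 2 * (stdCDF (Real.sqrt sb * m) * stdPdf m)) :=
        funext fun m => by rw [hf12def]; ring
      rw [he]
      exact (hint1.const_mul _).add (hint2.const_mul _)
    have hstdPdf_le_one : ∀ x, stdPdf x ≤ 1 := by
      intro x
      refine le_trans (stdPdf_le x) ?_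
      rw [inv_le_one_iff₀]
      right
      rw [show (1:ℝ) = Real.sqrt 1 by simp]
      exact Real.sqrt_le_sqrt (by nlinarith [Real.pi_gt_three])
    have hint3 : Integrable f3 := by
      refine integrable_abs_stdPdf.mono'
        (((continuous_id.mul (continuous_stdPdf.comp
          (continuous_const.mul continuous_id))).mul continuous_stdPdf).aestronglyMeasurable)
        (Filter.Eventually.of_forall fun m => ?_)
      rw [Real.norm_eq_abs, abs_mul, abs_mul, abs_of_nonneg (stdPdf_nonneg _),
        abs_of_nonneg (stdPdf_nonneg _)]
      exact mul_le_mul_of_nonneg_right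
        (mul_le_of_le_one_right (abs_nonneg m) (hstdPdf_le_one _)) (stdPdf_nonneg m)
    have h3 : ∫ m, f3 m = 0 := by
      have h := integral_comp_neg' f3
      have heqn : (fun m => f3 (-m)) = fun m => -f3 m := funext fun m => by
        rw [hf3def]
        simp only
        rw [show Real.sqrt sb * -m = -(Real.sqrt sb * m) by ring, stdPdf_even, stdPdf_even]
        ring
      rw [heqn, integral_neg] at h
      linarith
    have h12 : ∫ m, f12 m = 1 := by
      have h := integral_comp_neg' f12
      have heqn : (fun m => f12 (-m)) = fun m =>
          (2 / (1 + sb) + 2 * sb / (1 + sb) * m ^ 2) * stdPdf m - f12 m := funext fun m => by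
        rw [hf12def]
        simp only
        rw [show Real.sqrt sb * -m = -(Real.sqrt sb * m) by ring, stdCDF_neg, stdPdf_even]
        ring
      have hgint : Integrable (fun m => (2 / (1 + sb) + 2 * sb / (1 + sb) * m ^ 2) * stdPdf m) := by
        have he : (fun m => (2 / (1 + sb) + 2 * sb / (1 + sb) * m ^ 2) * stdPdf m) =
            fun m => (2 / (1 + sb)) * stdPdf m + (2 * sb / (1 + sb)) * (m ^ 2 * stdPdf m) :=
          funext fun m => by ring
        rw [he]
        exact (integrable_stdPdf.const_mul _).add (integrable_sq_stdPdf.const_mul _)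
      rw [heqn, integral_sub hgint hintf12] at h
      have hg : ∫ m, (2 / (1 + sb) + 2 * sb / (1 + sb) * m ^ 2) * stdPdf m = 2 := by
        have he : (fun m => (2 / (1 + sb) + 2 * sb / (1 + sb) * m ^ 2) * stdPdf m) =
            fun m => (2 / (1 + sb)) * stdPdf m + (2 * sb / (1 + sb)) * (m ^ 2 * stdPdf m) :=
          funext fun m => by ring
        rw [he, integral_add (integrable_stdPdf.const_mul _) (integrable_sq_stdPdf.const_mul _),
          integral_const_mul, integral_const_mul, integral_stdPdf, integral_sq_stdPdf]
        field_simp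
      rw [hg] at h
      linarith
    calc ∫ m, p m = ∫ m, (f12 m + (2 * Real.sqrt sb / (1 + sb)) * f3 m) := by
          congr 1
          funext m
          exact hpeq m
      _ = (∫ m, f12 m) + (2 * Real.sqrt sb / (1 + sb)) * ∫ m, f3 m := by
          rw [integral_add hintf12 (hint3.const_mul _), integral_const_mul]
      _ = 1 := by rw [h12, h3]; ring
end
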